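/- (Semantic array-view split) Fix a type T. For all integers n ≥ 0 and 0 ≤ i ≤ n and every address ℓ, if a state ST satisfies arrayView(T, n, ℓ), then there exist states ST₁ and ST₂ with disjoint domains such that ST = ST₁⊗ST₂, ST₁ satisfies arrayView(T, i, ℓ), and ST₂ satisfies arrayView(T, n−i, ℓ+i). -/
import Mathlib


namespace ArrayViewSem

/-- A state: a (partial, finite-in-practice) map from addresses (naturals) to closed values.
`Val` is the type of closed values. -/
def State (Val : Type) := ℕ → Option Val

variable {Val : Type}

/-- The empty state `[]`. -/
def emptyS : State Val := fun _ => none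

/-- The singleton state `[ℓ ↦ v]`. -/
def single (l : ℕ) (v : Val) : State Val := fun a => if a = l then some v else none

/-- Two states have disjoint domains. -/
def Disj (s1 s2 : State Val) : Prop := ∀ a, s1 a = none ∨ s2 a = none

/-- The union `ST₁ ⊗ ST₂` of two states (intended to be used when domains are disjoint). -/
def union (s1 s2 : State Val) : State Val := fun a => (s1 a).orElse (fun _ => s2 a)

/-- `ST ⊨ arrayView(T, n, ℓ)` where `good v` expresses that `v` is a closed value of the
fixed type `T`:  `ST ⊨ arrayView(T,0,ℓ)` iff `ST = []`, and `ST ⊨ arrayView(T,n+1,ℓ)` iff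
`ST = ST′ ⊗ ST″` with `ST′ ⊨ T@ℓ` (a singleton `[ℓ ↦ v]` with `v` of type `T`) and
`ST″ ⊨ arrayView(T,n,ℓ+1)`. -/
inductive ArrayView (good : Val → Prop) : ℕ → ℕ → State Val → Prop
  | nil (ℓ : ℕ) : ArrayView good 0 ℓ emptyS
  | cons {n ℓ : ℕ} {v : Val} {ST : State Val} :
      good v → Disj (single ℓ v) ST → ArrayView good n (ℓ + 1) ST →
      ArrayView good (n + 1) ℓ (union (single ℓ v) ST)

end ArrayViewSem

namespace ArrayViewSem

lemma union_empty_left {Val : Type} (s : State Val) : union emptyS s = s := by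
  funext a; rfl

lemma union_assoc {Val : Type} (a b c : State Val) :
    union (union a b) c = union a (union b c) := by
  funext x
  simp only [union, Option.orElse]
  cases a x <;> rfl

lemma disj_empty {Val : Type} (s : State Val) : Disj emptyS s := fun _ => Or.inl rfl

lemma disj_union_left {Val : Type} {a b c : State Val} (h1 : Disj a c) (h2 : Disj b c) :
    Disj (union a b) c := by
  intro x
  rcases h1 x with h | h
  · rcases h2 x with h' | h'
    · left; simp [union, h, h', Option.orElse]
    · right; exact h'
  · right; exact h

lemma disj_union_right {Val : Type} {a b c : State Val} (h1 : Disj a b) (h2 : Disj a c) :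
    Disj a (union b c) := by
  intro x
  rcases h1 x with h | h
  · left; exact h
  · rcases h2 x with h' | h'
    · left; exact h'
    · right; simp [union, h, h', Option.orElse]

lemma union_eq_none {Val : Type} {a b : State Val} {x : ℕ} (h : union a b x = none) :
    a x = none ∧ b x = none := by
  simp only [union, Option.orElse] at h
  cases ha : a x <;> rw [ha] at h
  · exact ⟨rfl, h⟩
  · exact absurd h (by simp)

/-- **Semantic array-view split** (the semantic content of `splitLemma`):
if `ST ⊨ arrayView(T, n, ℓ)` and `0 ≤ i ≤ n`, then `ST` splits as a disjoint union
`ST = ST₁ ⊗ ST₂` with `ST₁ ⊨ arrayView(T, i, ℓ)` and `ST₂ ⊨ arrayView(T, n−i, ℓ+i)`. -/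
theorem arrayView_split {Val : Type} (good : Val → Prop) (n i ℓ : ℕ) (hin : i ≤ n)
    (ST : State Val) (hST : ArrayView good n ℓ ST) :
    ∃ ST1 ST2 : State Val, Disj ST1 ST2 ∧ ST = union ST1 ST2 ∧
      ArrayView good i ℓ ST1 ∧ ArrayView good (n - i) (ℓ + i) ST2 := by
  induction i generalizing n ℓ ST with
  | zero =>
    exact ⟨emptyS, ST, disj_empty ST, (union_empty_left ST).symm,
      ArrayView.nil ℓ, by simpa using hST⟩
  | succ i ih =>
    cases hST with
    | nil => omega
    | @cons m _ v ST' hg hd htail =>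
      obtain ⟨S1, S2, hdisj, heq, h1, h2⟩ :=
        ih m (ℓ + 1) (Nat.succ_le_succ_iff.mp hin) ST' htail
      subst heq
      refine ⟨union (single ℓ v) S1, S2, ?_, (union_assoc _ _ _).symm, ?_, ?_⟩
      · exact disj_union_left
          (fun x => (hd x).imp id (fun h => (union_eq_none h).2)) hdisj
      · exact ArrayView.cons hg
          (fun x => (hd x).imp id (fun h => (union_eq_none h).1)) h1
      · have : m + 1 - (i + 1) = m - i := by omega
        have h' : ℓ + (i + 1) = ℓ + 1 + i := by omega
        rw [this, h']; exact h2

end ArrayViewSem
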